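/- There exist unit vectors a, a', b, b' in ℝ³ (with the standard Euclidean inner product ⟪·,·⟫) such that |(−⟪a,b⟫) − (−⟪a,b'⟫) + (−⟪a',b⟫) + (−⟪a',b'⟫)| = 2√2 > 2. -/

import Mathlib

open scoped RealInnerProductSpace

/-- The quantum mechanical correlations `E(a,b) = -⟪a,b⟫` of the EPR-Bohm
experiment violate the CHSH inequality: there are unit vectors `a, a', b, b'`
for which the CHSH combination attains the value `2√2 > 2`. -/
theorem qm_violates_chsh :
    ∃ a a' b b' : EuclideanSpace ℝ (Fin 3),
      ‖a‖ = 1 ∧ ‖a'‖ = 1 ∧ ‖b‖ = 1 ∧ ‖b'‖ = 1 ∧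
      |(-⟪a, b⟫) - (-⟪a, b'⟫) + (-⟪a', b⟫) + (-⟪a', b'⟫)| = 2 * Real.sqrt 2 ∧
      2 * Real.sqrt 2 > 2 := by
  have h2 : Real.sqrt 2 > 0 := by positivity
  have hs : Real.sqrt 2 * Real.sqrt 2 = 2 := Real.mul_self_sqrt (by norm_num)
  have hgt : 2 * Real.sqrt 2 > 2 := by nlinarith [hs, h2]
  refine ⟨!₂[1,0,0], !₂[0,1,0], !₂[-(Real.sqrt 2)⁻¹, -(Real.sqrt 2)⁻¹, 0],
    !₂[(Real.sqrt 2)⁻¹, -(Real.sqrt 2)⁻¹, 0], ?_, ?_, ?_, ?_, ?_, hgt⟩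
  · simp [EuclideanSpace.norm_eq, Fin.sum_univ_three]
  · simp [EuclideanSpace.norm_eq, Fin.sum_univ_three]
  · rw [EuclideanSpace.norm_eq]
    simp only [Fin.sum_univ_three, PiLp.toLp_apply, Matrix.cons_val_zero, Matrix.cons_val_one, Matrix.head_cons,
      Matrix.cons_val_two, Matrix.tail_cons, Real.norm_eq_abs, sq_abs]
    rw [show (-(Real.sqrt 2)⁻¹) ^ 2 + (-(Real.sqrt 2)⁻¹) ^ 2 + (0:ℝ) ^ 2 = 1 by
      field_simp
      norm_num]
    exact Real.sqrt_one
  · rw [EuclideanSpace.norm_eq]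
    simp only [Fin.sum_univ_three, PiLp.toLp_apply, Matrix.cons_val_zero, Matrix.cons_val_one, Matrix.head_cons,
      Matrix.cons_val_two, Matrix.tail_cons, Real.norm_eq_abs, sq_abs]
    rw [show ((Real.sqrt 2)⁻¹) ^ 2 + (-(Real.sqrt 2)⁻¹) ^ 2 + (0:ℝ) ^ 2 = 1 by
      field_simp
      norm_num]
    exact Real.sqrt_one
  · simp only [PiLp.inner_apply, PiLp.toLp_apply, RCLike.inner_apply, conj_trivial, Fin.sum_univ_three,
      Matrix.cons_val_zero, Matrix.cons_val_one, Matrix.head_cons, Matrix.cons_val_two,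
      Matrix.tail_cons]
    rw [abs_of_nonneg]
    · field_simp
      nlinarith
    · have : (Real.sqrt 2)⁻¹ > 0 := by positivity
      nlinarith
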